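/- Let A be a family of subsets of an n-element set containing no chain with l+1 distinct members (l-chain-free). Then |A| is at most the sum of the l largest binomial coefficients C(n,j) for 0 ≤ j ≤ n. -/

import Mathlib

open Finset

/-- A family of sets is `l`-chain-free if it contains no chain of length `l`,
i.e. no `l + 1` distinct pairwise comparable members. -/
def ChainFree {X : Type*} [PartialOrder X] (l : ℕ) (A : Set X) : Prop :=
  ¬ ∃ c : Fin (l + 1) → X, StrictMono c ∧ ∀ i, c i ∈ A

/-- Appending a larger element to a strictly monotone tuple keeps it strictly monotone. -/
lemma strictMono_snoc_aux {X : Type*} [Preorder X] {k : ℕ} {c : Fin (k + 1) → X}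
    (hc : StrictMono c) {D : X} (hD : c (Fin.last k) < D) :
    StrictMono (Fin.snoc c D : Fin (k + 2) → X) := by
  intro i j hij
  rcases Fin.eq_castSucc_or_eq_last j with ⟨j', rfl⟩ | rfl
  · obtain ⟨i', rfl⟩ : ∃ i' : Fin (k + 1), i = i'.castSucc := by
      rcases Fin.eq_castSucc_or_eq_last i with ⟨i', rfl⟩ | rfl
      · exact ⟨i', rfl⟩
      · exact absurd rfl (Fin.ne_last_of_lt hij)
    rw [Fin.snoc_castSucc, Fin.snoc_castSucc]
    exact hc (by exact_mod_cast hij)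
  · obtain ⟨i', rfl⟩ : ∃ i' : Fin (k + 1), i = i'.castSucc := by
      rcases Fin.eq_castSucc_or_eq_last i with ⟨i', rfl⟩ | rfl
      · exact ⟨i', rfl⟩
      · exact absurd rfl (Fin.ne_last_of_lt hij)
    rw [Fin.snoc_castSucc, Fin.snoc_last]
    exact lt_of_le_of_lt (hc.monotone (Fin.le_last i')) hD

/-- Pick the `m` elements of `s` with the largest `f`-values. -/
lemma exists_top_subset (s : Finset ℕ) (f : ℕ → ℕ) :
    ∀ m, m ≤ s.card → ∃ T ⊆ s, T.card = m ∧ ∀ i ∈ T, ∀ j ∈ s \ T, f j ≤ f i := by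
  intro m
  induction m with
  | zero => exact fun _ => ⟨∅, empty_subset _, card_empty, by simp⟩
  | succ m ih =>
    intro hm
    obtain ⟨T, hTs, hTc, hTd⟩ := ih (Nat.le_of_succ_le hm)
    have hne : (s \ T).Nonempty := by
      rw [← card_pos, card_sdiff_of_subset hTs, hTc]; omega
    obtain ⟨j0, hj0, hj0max⟩ := (s \ T).exists_max_image f hne
    have hj0T : j0 ∉ T := (mem_sdiff.mp hj0).2
    refine ⟨insert j0 T, insert_subset (mem_sdiff.mp hj0).1 hTs, ?_, ?_⟩
    · rw [card_insert_of_notMem hj0T, hTc]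
    · intro i hi j hj
      have hj' : j ∈ s \ T :=
        sdiff_subset_sdiff (Finset.Subset.refl s) (subset_insert j0 T) hj
      rcases mem_insert.mp hi with rfl | hiT
      · exact hj0max j hj'
      · exact hTd i hiT j hj'

/-- Generalized LYM inequality for `l`-chain-free families, by Mirsky-style
induction (peeling off the maximal elements, which form an antichain). -/
lemma lym_chainFree {β : Type*} [Fintype β] [DecidableEq β] :
    ∀ (l : ℕ) (ℬ : Finset (Finset β)), ChainFree l (ℬ : Set (Finset β)) →
    ∑ r ∈ range (Fintype.card β + 1),
      ((ℬ # r).card : ℚ) / ((Fintype.card β).choose r) ≤ l := by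
  intro l
  induction l with
  | zero =>
    intro ℬ hcf
    have hempty : ℬ = ∅ := by
      by_contra h
      obtain ⟨A, hA⟩ := Finset.nonempty_iff_ne_empty.mpr h
      exact hcf ⟨fun _ => A, fun i j hij => ((by
        have hi : (i : ℕ) < 1 := i.isLt
        have hj : (j : ℕ) < 1 := j.isLt
        have := Fin.lt_def.mp hij
        omega : False)).elim, fun _ => hA⟩
    subst hempty
    simp [Finset.slice]
  | succ l ih =>
    intro ℬ hcf
    classical
    set ℳ : Finset (Finset β) := ℬ.filter (fun A => ∀ B ∈ ℬ, ¬ A ⊂ B) with hℳ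
    have hℳsub : ℳ ⊆ ℬ := filter_subset _ _
    -- maximal elements form an antichain
    have hanti : IsAntichain (· ⊆ ·) (ℳ : Set (Finset β)) := by
      intro A hA B hB hne hsub
      simp only [hℳ, coe_filter, Set.mem_setOf_eq] at hA hB
      exact hA.2 B hB.1 (lt_of_le_of_ne hsub hne)
    -- the rest is (l)-chain-free
    have hrest : ChainFree l ((ℬ \ ℳ : Finset (Finset β)) : Set (Finset β)) := by
      rintro ⟨c, hc, hmem⟩
      have hlast := hmem (Fin.last l)
      simp only [coe_sdiff, Set.mem_diff, mem_coe] at hlast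
      obtain ⟨hlB, hlM⟩ := hlast
      have : ∃ D ∈ ℬ, c (Fin.last l) ⊂ D := by
        by_contra h
        push_neg at h
        exact hlM (mem_filter.mpr ⟨hlB, h⟩)
      obtain ⟨D, hD, hcD⟩ := this
      refine hcf ⟨Fin.snoc c D, strictMono_snoc_aux hc hcD, ?_⟩
      intro i
      rcases Fin.eq_castSucc_or_eq_last i with ⟨i', rfl⟩ | rfl
      · have := hmem i'
        simp only [coe_sdiff, Set.mem_diff, mem_coe] at this
        simpa [Fin.snoc_castSucc] using this.1
      · simpa [Fin.snoc_last] using hD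
    have hsplit : ∀ r, ((ℬ # r).card : ℚ) = ((ℳ # r).card : ℚ) + (((ℬ \ ℳ) # r).card : ℚ) := by
      intro r
      have hslice : ℬ # r = (ℳ # r) ∪ ((ℬ \ ℳ) # r) := by
        ext A
        simp only [Finset.mem_slice, Finset.mem_union, Finset.mem_sdiff]
        constructor
        · rintro ⟨hAB, hAr⟩
          by_cases hAM : A ∈ ℳ
          · exact Or.inl ⟨hAM, hAr⟩
          · exact Or.inr ⟨⟨hAB, hAM⟩, hAr⟩
        · rintro (⟨hAM, hAr⟩ | ⟨⟨hAB, _⟩, hAr⟩)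
          · exact ⟨hℳsub hAM, hAr⟩
          · exact ⟨hAB, hAr⟩
      have hdisj : Disjoint (ℳ # r) ((ℬ \ ℳ) # r) := by
        apply Finset.disjoint_filter_filter
        exact Finset.disjoint_sdiff
      rw [hslice, Finset.card_union_of_disjoint hdisj]
      push_cast; ring
    calc ∑ r ∈ range (Fintype.card β + 1),
          ((ℬ # r).card : ℚ) / ((Fintype.card β).choose r)
        = (∑ r ∈ range (Fintype.card β + 1),
            ((ℳ # r).card : ℚ) / ((Fintype.card β).choose r))
          + ∑ r ∈ range (Fintype.card β + 1),
            (((ℬ \ ℳ) # r).card : ℚ) / ((Fintype.card β).choose r) := by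
          rw [← Finset.sum_add_distrib]
          refine Finset.sum_congr rfl fun r _ => ?_
          rw [hsplit r, add_div]
      _ ≤ 1 + l := by
          gcongr
          · exact Finset.sum_card_slice_div_choose_le_one hanti
          · exact ih (ℬ \ ℳ) hrest
      _ = (l + 1 : ℕ) := by push_cast; ring

lemma Iic_eq_range_succ (n : ℕ) : Finset.Iic n = Finset.range (n + 1) := by
  ext x; simp [Nat.lt_succ_iff]

/-- Erdős's theorem over a fintype. -/
lemma erdos_fintype {β : Type*} [Fintype β] [DecidableEq β] (l : ℕ)
    (ℬ : Finset (Finset β)) (hcf : ChainFree l (ℬ : Set (Finset β))) :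
    ∃ T ⊆ Finset.range (Fintype.card β + 1), T.card ≤ l ∧
      ℬ.card ≤ ∑ j ∈ T, (Fintype.card β).choose j := by
  classical
  set n := Fintype.card β with hn
  have hcard_slice : ∀ r, (ℬ # r).card ≤ n.choose r := fun r =>
    Set.Sized.card_le (Finset.sized_slice)
  have hsum : ∑ r ∈ range (n + 1), (ℬ # r).card = ℬ.card := by
    rw [← Iic_eq_range_succ, Finset.sum_card_slice]
  by_cases hl : n + 1 ≤ l
  · refine ⟨range (n + 1), Finset.Subset.refl _, by simpa using hl, ?_⟩
    rw [← hsum]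
    exact Finset.sum_le_sum fun r _ => hcard_slice r
  · push_neg at hl
    have hl' : l ≤ (range (n + 1)).card := by rw [card_range]; omega
    obtain ⟨T, hTs, hTc, hTd⟩ := exists_top_subset (range (n + 1)) n.choose l hl'
    refine ⟨T, hTs, le_of_eq hTc, ?_⟩
    rcases Nat.eq_zero_or_pos l with rfl | hlpos
    · -- l = 0 : family is empty
      have : ℬ = ∅ := by
        by_contra h
        obtain ⟨A, hA⟩ := Finset.nonempty_iff_ne_empty.mpr h
        exact hcf ⟨fun _ => A, fun i j hij => ((by
          have hi : (i : ℕ) < 1 := i.isLt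
          have hj : (j : ℕ) < 1 := j.isLt
          have := Fin.lt_def.mp hij
          omega : False)).elim, fun _ => hA⟩
      simp [this]
    have hTne : T.Nonempty := Finset.card_pos.mp (hTc ▸ hlpos)
    obtain ⟨i₀, hi₀T, hi₀min⟩ := T.exists_min_image n.choose hTne
    -- work in ℚ
    set p : ℕ → ℚ := fun r => ((ℬ # r).card : ℚ) with hp
    set g : ℕ → ℚ := fun r => ((n.choose r : ℕ) : ℚ) with hg
    have hgpos : ∀ r ∈ range (n + 1), 0 < g r := by
      intro r hr
      have : 0 < n.choose r := Nat.choose_pos (Nat.lt_succ_iff.mp (mem_range.mp hr))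
      simp only [hg]
      exact_mod_cast this
    have hppos : ∀ r, 0 ≤ p r := fun r => by positivity
    have hpg : ∀ r, p r ≤ g r := fun r => by
      simp only [hp, hg]; exact_mod_cast hcard_slice r
    set B : ℚ := g i₀ with hB
    have hBle : ∀ i ∈ T, B ≤ g i := by
      intro i hi; simp only [hB, hg]; exact_mod_cast hi₀min i hi
    have hgleB : ∀ j ∈ range (n + 1) \ T, g j ≤ B := by
      intro j hj; simp only [hB, hg]; exact_mod_cast hTd i₀ hi₀T j hj
    have hBpos : 0 < B := hgpos i₀ (hTs hi₀T)
    have hlym : ∑ r ∈ range (n + 1), p r / g r ≤ (l : ℚ) := lym_chainFree l ℬ hcf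
    have hsum_split : ∑ r ∈ range (n + 1) \ T, p r / g r
        = (∑ r ∈ range (n + 1), p r / g r) - ∑ i ∈ T, p i / g i := by
      rw [eq_sub_iff_add_eq, Finset.sum_sdiff hTs]
    have hD : ∑ r ∈ range (n + 1) \ T, p r
        ≤ B * ((l : ℚ) - ∑ i ∈ T, p i / g i) := by
      calc ∑ r ∈ range (n + 1) \ T, p r
          = ∑ r ∈ range (n + 1) \ T, (p r / g r) * g r := by
            refine Finset.sum_congr rfl fun r hr => ?_
            rw [div_mul_cancel₀]
            exact ne_of_gt (hgpos r (mem_sdiff.mp hr).1)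
        _ ≤ ∑ r ∈ range (n + 1) \ T, (p r / g r) * B := by
            refine Finset.sum_le_sum fun r hr => ?_
            have h1 : 0 ≤ p r / g r :=
              div_nonneg (hppos r) (le_of_lt (hgpos r (mem_sdiff.mp hr).1))
            exact mul_le_mul_of_nonneg_left (hgleB r hr) h1
        _ = B * ∑ r ∈ range (n + 1) \ T, p r / g r := by
            rw [Finset.mul_sum]; exact Finset.sum_congr rfl fun r _ => mul_comm _ _
        _ ≤ B * ((l : ℚ) - ∑ i ∈ T, p i / g i) := by
            apply mul_le_mul_of_nonneg_left _ (le_of_lt hBpos)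
            rw [hsum_split]
            linarith [hlym]
    have hT2 : B * ((l : ℚ) - ∑ i ∈ T, p i / g i) ≤ ∑ i ∈ T, (g i - p i) := by
      have hcT : ((T.card : ℕ) : ℚ) = (l : ℚ) := by exact_mod_cast hTc
      have h1 : ∑ i ∈ T, B * (1 - p i / g i)
          = B * ((l : ℚ) - ∑ i ∈ T, p i / g i) := by
        calc ∑ i ∈ T, B * (1 - p i / g i)
            = ∑ i ∈ T, (B - B * (p i / g i)) :=
              Finset.sum_congr rfl fun i _ => by ring
          _ = T.card • B - B * ∑ i ∈ T, p i / g i := by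
              rw [Finset.sum_sub_distrib, Finset.sum_const, Finset.mul_sum]
          _ = B * ((l : ℚ) - ∑ i ∈ T, p i / g i) := by
              rw [nsmul_eq_mul, hcT]; ring
      rw [← h1]
      refine Finset.sum_le_sum fun i hi => ?_
      have hgi : 0 < g i := hgpos i (hTs hi)
      have h2 : 0 ≤ 1 - p i / g i := by
        rw [sub_nonneg, div_le_one hgi]; exact hpg i
      calc B * (1 - p i / g i) ≤ g i * (1 - p i / g i) :=
            mul_le_mul_of_nonneg_right (hBle i hi) h2
        _ = g i - p i := by
            rw [mul_sub, mul_one, mul_div_cancel₀ _ (ne_of_gt hgi)]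
    have hfinal : (ℬ.card : ℚ) ≤ ∑ i ∈ T, g i := by
      have : (ℬ.card : ℚ) = ∑ r ∈ range (n + 1), p r := by
        rw [← hsum]; push_cast; rfl
      rw [this, ← Finset.sum_sdiff hTs]
      have := hD.trans hT2
      have h3 : ∑ i ∈ T, (g i - p i) = (∑ i ∈ T, g i) - ∑ i ∈ T, p i :=
        Finset.sum_sub_distrib _ _
      linarith [this, h3 ▸ this]
    have : (ℬ.card : ℚ) ≤ ((∑ j ∈ T, n.choose j : ℕ) : ℚ) := by
      rw [Nat.cast_sum]; exact hfinal
    exact_mod_cast this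

/-- Erdős's theorem: an `l`-chain-free family of subsets of an `n`-element set has size at
most the sum of the `l` largest binomial coefficients `C(n, j)`, `0 ≤ j ≤ n`. -/
theorem erdos_theorem {α : Type*} [DecidableEq α] (n l : ℕ) (S : Finset α)
    (hS : S.card = n) (𝒜 : Finset (Finset α)) (hsub : ∀ A ∈ 𝒜, A ⊆ S)
    (hcf : ChainFree l (𝒜 : Set (Finset α))) :
    ∃ T ⊆ Finset.range (n + 1), T.card ≤ l ∧
      𝒜.card ≤ ∑ j ∈ T, n.choose j := by
  classical
  -- transfer everything to the subtype `↥S`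
  set F : Finset α → Finset {x // x ∈ S} := fun A => A.subtype (· ∈ S) with hF
  have hback : ∀ A ∈ 𝒜, (F A).map (Function.Embedding.subtype _) = A := by
    intro A hA
    exact Finset.subtype_map_of_mem (fun x hx => hsub A hA hx)
  set ℬ : Finset (Finset {x // x ∈ S}) := 𝒜.image F with hℬ
  have hcardeq : ℬ.card = 𝒜.card := by
    apply Finset.card_image_of_injOn
    intro A hA B hB hFAB
    rw [← hback A hA, ← hback B hB, hFAB]
  have hcfB : ChainFree l (ℬ : Set (Finset {x // x ∈ S})) := by
    rintro ⟨c, hc, hmem⟩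
    set a : Fin (l + 1) → Finset α :=
      fun i => (c i).map (Function.Embedding.subtype _) with ha
    have hmem' : ∀ i, a i ∈ 𝒜 := by
      intro i
      have := hmem i
      simp only [hℬ, coe_image, Set.mem_image, mem_coe] at this
      obtain ⟨A, hA, hFA⟩ := this
      rw [ha]
      simp only [← hFA]
      rw [hback A hA]
      exact hA
    refine hcf ⟨a, ?_, hmem'⟩
    intro i j hij
    have : c i ⊂ c j := hc hij
    exact Finset.map_ssubset_map.mpr this
  obtain ⟨T, hTs, hTc, hTb⟩ := erdos_fintype l ℬ hcfB
  have hcS : Fintype.card {x // x ∈ S} = n := by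
    rw [Fintype.card_coe, hS]
  rw [hcS] at hTs hTb
  exact ⟨T, hTs, hTc, by rwa [hcardeq] at hTb⟩
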